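/- Let A₁ be a real symmetric n₁×n₁ matrix, A₃ a real symmetric n₂×n₂ matrix, and A₂ a real n₁×n₂ matrix. Let M be the (n₁+n₂)×(n₁+n₂) symmetric block matrix [[A₁, A₂],[A₂ᵀ, A₃]] and let B be the symmetric block matrix [[0, A₂],[A₂ᵀ, 0]]. Then μ₂(B) ≤ μ₂(M) + max(0, −μ_{n₁}(A₁)) + max(0, −μ_{n₂}(A₃)), where μ_{n₁}(A₁) and μ_{n₂}(A₃) denote the smallest eigenvalues of A₁ and A₃ respectively. -/

import Mathlib

open Matrix

open Classical in
/-- The multiset of eigenvalues of a real symmetric matrix (junk value otherwise). -/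
noncomputable def eigs {m : Type*} [Fintype m] [DecidableEq m] (A : Matrix m m ℝ) : Multiset ℝ :=
  if h : A.IsHermitian then Finset.univ.val.map h.eigenvalues
  else Multiset.replicate (Fintype.card m) 0

/-- `mu A i` is the `i`-th largest eigenvalue (1-indexed, so `μ₁ ≥ μ₂ ≥ …`) of the
real symmetric matrix `A`. -/
noncomputable def mu {m : Type*} [Fintype m] [DecidableEq m] (A : Matrix m m ℝ) (i : ℕ) : ℝ :=
  (((eigs A).sort (· ≤ ·)).reverse).getD (i - 1) 0

open RealInnerProductSpace Finset

section aux

lemma eigs_card {m : Type*} [Fintype m] [DecidableEq m] (A : Matrix m m ℝ) :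
    Multiset.card (eigs A) = Fintype.card m := by
  unfold eigs; split <;> simp

lemma eigs_eq {m : Type*} [Fintype m] [DecidableEq m] {A : Matrix m m ℝ} (hA : A.IsHermitian) :
    eigs A = Finset.univ.val.map hA.eigenvalues := by
  unfold eigs; rw [dif_pos hA]

lemma aux_cons (s : Multiset ℝ) (h2 : 2 ≤ Multiset.card s) :
    ∃ (a b : ℝ) (r : List ℝ), ((s.sort (· ≤ ·)).reverse) = a :: b :: r := by
  have hl : ((s.sort (· ≤ ·)).reverse).length = Multiset.card s := by simp
  rcases hL : (s.sort (· ≤ ·)).reverse with _ | ⟨a, l2⟩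
  · rw [hL] at hl; simp at hl; omega
  · rcases hl2 : l2 with _ | ⟨b, r⟩
    · rw [hL, hl2] at hl; simp at hl; omega
    · subst hl2; exact ⟨a, b, r, rfl⟩

lemma aux_pairwise (s : Multiset ℝ) :
    ((s.sort (· ≤ ·)).reverse).Pairwise (fun x y => y ≤ x) := by
  rw [List.pairwise_reverse]
  exact Multiset.pairwise_sort s _

lemma aux_coe (s : Multiset ℝ) : ((((s.sort (· ≤ ·)).reverse) : List ℝ) : Multiset ℝ) = s := by
  rw [Multiset.coe_reverse, Multiset.sort_eq]

lemma aux1 (s : Multiset ℝ) (h2 : 2 ≤ Multiset.card s) {t : ℝ}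
    (ht : t < ((s.sort (· ≤ ·)).reverse).getD 1 0) :
    2 ≤ Multiset.card (s.filter (t < ·)) := by
  obtain ⟨a, b, r, hL⟩ := aux_cons s h2
  have hp := aux_pairwise s
  have hc := aux_coe s
  rw [hL] at hp hc ht
  simp only [List.getD_cons_succ, List.getD_cons_zero] at ht
  have hba : b ≤ a := (List.pairwise_cons.1 hp).1 b (by simp)
  rw [← hc]
  have heq : Multiset.filter (t < ·) (↑(a :: b :: r) : Multiset ℝ) =
      a ::ₘ b ::ₘ Multiset.filter (t < ·) (↑r : Multiset ℝ) := by
    rw [show ((a :: b :: r : List ℝ) : Multiset ℝ) = a ::ₘ b ::ₘ (↑r : Multiset ℝ) from rfl,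
      Multiset.filter_cons_of_pos _ (lt_of_lt_of_le ht hba),
      Multiset.filter_cons_of_pos _ ht]
  rw [heq]
  simp

lemma aux2 (s : Multiset ℝ) (h2 : 2 ≤ Multiset.card s) :
    Multiset.card (s.filter (((s.sort (· ≤ ·)).reverse).getD 1 0 < ·)) ≤ 1 := by
  obtain ⟨a, b, r, hL⟩ := aux_cons s h2
  have hp := aux_pairwise s
  have hc := aux_coe s
  rw [hL] at hp hc
  have hv : ((s.sort (· ≤ ·)).reverse).getD 1 0 = b := by rw [hL]; rfl
  have h2' := (List.pairwise_cons.1 (List.pairwise_cons.1 hp).2).1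
  rw [hv]
  conv_lhs => rw [← hc]
  rw [show ((a :: b :: r : List ℝ) : Multiset ℝ) = a ::ₘ b ::ₘ (↑r : Multiset ℝ) from rfl]
  rw [Multiset.filter_cons, Multiset.filter_cons_of_neg _ (lt_irrefl b)]
  have hr : Multiset.filter (b < ·) (↑r : Multiset ℝ) = 0 := by
    rw [Multiset.filter_eq_nil]
    intro x hx
    exact not_lt.2 (h2' x (by simpa using hx))
  rw [hr]
  split <;> simp

lemma aux3 (s : Multiset ℝ) {a : ℝ} (ha : a ∈ s) :
    ((s.sort (· ≤ ·)).reverse).getD (Multiset.card s - 1) 0 ≤ a := by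
  have hl : ((s.sort (· ≤ ·)).reverse).length = Multiset.card s := by simp
  obtain ⟨c, r, hL⟩ : ∃ (c : ℝ) (r : List ℝ), s.sort (· ≤ ·) = c :: r := by
    refine List.exists_cons_of_ne_nil ?_
    intro h
    rw [← Multiset.sort_eq s (· ≤ ·), h] at ha
    simp at ha
  have hsort := Multiset.pairwise_sort s (· ≤ ·)
  rw [hL] at hsort
  have hc : ((s.sort (· ≤ ·)).reverse) = r.reverse ++ [c] := by rw [hL]; simp
  have hlen : Multiset.card s - 1 = r.reverse.length := by
    rw [← hl, hc]; simp
  rw [hc, hlen, List.getD_append_right _ _ _ _ le_rfl]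
  simp only [Nat.sub_self, List.getD_cons_zero]
  have ha' : a ∈ (c :: r : List ℝ) := by
    rw [← hL]
    rw [← Multiset.sort_eq s (· ≤ ·)] at ha
    exact ha
  rcases List.mem_cons.1 ha' with h | h
  · exact h.ge
  · exact List.rel_of_pairwise_cons hsort h

end aux

section spectral

variable {m : Type*} [Fintype m] [DecidableEq m] {A : Matrix m m ℝ}

lemma toEuclideanLin_eigenBasis (hA : A.IsHermitian) (j : m) :
    Matrix.toEuclideanLin A (hA.eigenvectorBasis j) = hA.eigenvalues j • hA.eigenvectorBasis j := by
  apply (WithLp.equiv 2 (m → ℝ)).injective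
  ext i
  simp [Matrix.toEuclideanLin_apply, hA.mulVec_eigenvectorBasis j]

lemma quad_eq (hA : A.IsHermitian) (x : EuclideanSpace ℝ m) :
    ⟪x, Matrix.toEuclideanLin A x⟫ =
      ∑ k, hA.eigenvalues k * (hA.eigenvectorBasis.repr x k)^2 := by
  conv_lhs => rw [show Matrix.toEuclideanLin A x
    = Matrix.toEuclideanLin A (∑ k, hA.eigenvectorBasis.repr x k • hA.eigenvectorBasis k) by
      rw [hA.eigenvectorBasis.sum_repr x]]
  rw [map_sum]
  rw [inner_sum]
  congr 1
  ext k
  rw [_root_.map_smul, toEuclideanLin_eigenBasis hA k, real_inner_smul_right, real_inner_smul_right,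
    real_inner_comm, ← OrthonormalBasis.repr_apply_apply]
  ring

lemma normsq_eq (b : OrthonormalBasis m ℝ (EuclideanSpace ℝ m)) (x : EuclideanSpace ℝ m) :
    ⟪x, x⟫ = ∑ k, (b.repr x k)^2 := by
  rw [← b.repr.inner_map_map x x]
  rw [show ⟪b.repr x, b.repr x⟫ = ∑ k, (b.repr x k) * (b.repr x k) from PiLp.inner_apply _ _]
  congr 1; ext k; ring

lemma quad_upper (hA : A.IsHermitian) {t : ℝ} {x : EuclideanSpace ℝ m}
    (h : ∀ k, hA.eigenvalues k ≤ t ∨ hA.eigenvectorBasis.repr x k = 0) :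
    ⟪x, Matrix.toEuclideanLin A x⟫ ≤ t * ⟪x, x⟫ := by
  rw [quad_eq hA, normsq_eq hA.eigenvectorBasis, Finset.mul_sum]
  refine Finset.sum_le_sum fun k _ => ?_
  rcases h k with h' | h'
  · exact mul_le_mul_of_nonneg_right h' (sq_nonneg _)
  · simp [h']

lemma quad_lower (hA : A.IsHermitian) {t : ℝ} {x : EuclideanSpace ℝ m}
    (h : ∀ k, t ≤ hA.eigenvalues k) :
    t * ⟪x, x⟫ ≤ ⟪x, Matrix.toEuclideanLin A x⟫ := by
  rw [quad_eq hA, normsq_eq hA.eigenvectorBasis, Finset.mul_sum]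
  refine Finset.sum_le_sum fun k _ => ?_
  exact mul_le_mul_of_nonneg_right (h k) (sq_nonneg _)

lemma quad_lower_strict (hA : A.IsHermitian) {t : ℝ} {x : EuclideanSpace ℝ m}
    (h : ∀ k, t < hA.eigenvalues k ∨ hA.eigenvectorBasis.repr x k = 0) (hx : x ≠ 0) :
    t * ⟪x, x⟫ < ⟪x, Matrix.toEuclideanLin A x⟫ := by
  rw [quad_eq hA, normsq_eq hA.eigenvectorBasis, Finset.mul_sum]
  have hx' : hA.eigenvectorBasis.repr x ≠ 0 := by
    intro h0
    exact hx (by simpa using hA.eigenvectorBasis.repr.map_eq_zero_iff.1 (by ext k; simp [h0]))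
  obtain ⟨k0, hk0⟩ : ∃ k, hA.eigenvectorBasis.repr x k ≠ 0 := by
    by_contra hc
    push_neg at hc
    exact hx' (by ext k; simp [hc k])
  refine Finset.sum_lt_sum (fun k _ => ?_) ⟨k0, Finset.mem_univ k0, ?_⟩
  · rcases h k with h' | h'
    · exact mul_le_mul_of_nonneg_right h'.le (sq_nonneg _)
    · simp [h']
  · rcases h k0 with h' | h'
    · exact mul_lt_mul_of_pos_right h' (by positivity)
    · exact absurd h' hk0

lemma repr_eq_zero_of_mem_span (b : OrthonormalBasis m ℝ (EuclideanSpace ℝ m)) {P : m → Prop}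
    {x : EuclideanSpace ℝ m}
    (hx : x ∈ Submodule.span ℝ (Set.range (fun k : {k // P k} => b (k : m))))
    {k : m} (hk : ¬ P k) : b.repr x k = 0 := by
  induction hx using Submodule.span_induction with
  | mem y hy =>
    obtain ⟨⟨j, hj⟩, rfl⟩ := hy
    rw [OrthonormalBasis.repr_self]
    have : k ≠ j := fun h => hk (h ▸ hj)
    simp [EuclideanSpace.single_apply, this]
  | zero => simp
  | add y z _ _ hy hz => rw [map_add]; simp [hy, hz]
  | smul c y _ hy => rw [_root_.map_smul]; simp [hy]

end spectral

section dims

lemma finrank_span_orthonormal {m : Type*} [Fintype m] [DecidableEq m]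
    (b : OrthonormalBasis m ℝ (EuclideanSpace ℝ m)) (P : m → Prop) [DecidablePred P] :
    Module.finrank ℝ (Submodule.span ℝ (Set.range (fun k : {k // P k} => b (k : m)))) =
      Fintype.card {k // P k} :=
  finrank_span_eq_card ((b.orthonormal.comp _ Subtype.val_injective).linearIndependent)

end dims

section blocks

variable {n₁ n₂ : ℕ}

lemma quadD_split (A₁ : Matrix (Fin n₁) (Fin n₁) ℝ) (A₃ : Matrix (Fin n₂) (Fin n₂) ℝ)
    (x : EuclideanSpace ℝ (Fin n₁ ⊕ Fin n₂)) :
    ⟪x, Matrix.toEuclideanLin (Matrix.fromBlocks A₁ 0 0 A₃) x⟫ =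
      ⟪(WithLp.equiv 2 (Fin n₁ → ℝ)).symm (fun i => x (Sum.inl i)),
        Matrix.toEuclideanLin A₁ ((WithLp.equiv 2 (Fin n₁ → ℝ)).symm (fun i => x (Sum.inl i)))⟫ +
      ⟪(WithLp.equiv 2 (Fin n₂ → ℝ)).symm (fun i => x (Sum.inr i)),
        Matrix.toEuclideanLin A₃ ((WithLp.equiv 2 (Fin n₂ → ℝ)).symm (fun i => x (Sum.inr i)))⟫ := by
  simp [PiLp.inner_apply, RCLike.inner_apply, Matrix.toEuclideanLin_apply,
    WithLp.equiv_symm_apply, Matrix.mulVec, dotProduct,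
    Fintype.sum_sum_type, Matrix.fromBlocks]

lemma innersq_split (x : EuclideanSpace ℝ (Fin n₁ ⊕ Fin n₂)) :
    ⟪x, x⟫ = ⟪(WithLp.equiv 2 (Fin n₁ → ℝ)).symm (fun i => x (Sum.inl i)),
        (WithLp.equiv 2 (Fin n₁ → ℝ)).symm (fun i => x (Sum.inl i))⟫ +
      ⟪(WithLp.equiv 2 (Fin n₂ → ℝ)).symm (fun i => x (Sum.inr i)),
        (WithLp.equiv 2 (Fin n₂ → ℝ)).symm (fun i => x (Sum.inr i))⟫ := by
  rw [PiLp.inner_apply, PiLp.inner_apply, PiLp.inner_apply]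
  simp [RCLike.inner_apply, Fintype.sum_sum_type]

end blocks

theorem stmt3 (n₁ n₂ : ℕ)
    (A₁ : Matrix (Fin n₁) (Fin n₁) ℝ) (A₂ : Matrix (Fin n₁) (Fin n₂) ℝ)
    (A₃ : Matrix (Fin n₂) (Fin n₂) ℝ)
    (h₁ : A₁.IsHermitian) (h₃ : A₃.IsHermitian) :
    mu (Matrix.fromBlocks (0 : Matrix (Fin n₁) (Fin n₁) ℝ) A₂ A₂ᵀ
        (0 : Matrix (Fin n₂) (Fin n₂) ℝ)) 2 ≤
      mu (Matrix.fromBlocks A₁ A₂ A₂ᵀ A₃) 2 + max 0 (-(mu A₁ n₁)) + max 0 (-(mu A₃ n₂)) := by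
  classical
  set Mm := Matrix.fromBlocks A₁ A₂ A₂ᵀ A₃ with hMdef
  set Bm := Matrix.fromBlocks (0 : Matrix (Fin n₁) (Fin n₁) ℝ) A₂ A₂ᵀ
    (0 : Matrix (Fin n₂) (Fin n₂) ℝ) with hBdef
  have hA2 : (A₂)ᴴ = A₂ᵀ := Matrix.conjTranspose_eq_transpose_of_trivial A₂
  have hA2T : (A₂ᵀ)ᴴ = A₂ := by
    rw [Matrix.conjTranspose_eq_transpose_of_trivial, Matrix.transpose_transpose]
  have hM : Mm.IsHermitian := Matrix.isHermitian_fromBlocks_iff.2 ⟨h₁, hA2, hA2T, h₃⟩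
  have hB : Bm.IsHermitian :=
    Matrix.isHermitian_fromBlocks_iff.2 ⟨Matrix.isHermitian_zero, hA2, hA2T,
      Matrix.isHermitian_zero⟩
  set c₁ := max 0 (-(mu A₁ n₁)) with hc₁def
  set c₂ := max 0 (-(mu A₃ n₂)) with hc₂def
  have hc₁0 : 0 ≤ c₁ := le_max_left _ _
  have hc₂0 : 0 ≤ c₂ := le_max_left _ _
  have hcard : Fintype.card (Fin n₁ ⊕ Fin n₂) = n₁ + n₂ := by simp
  rcases lt_or_ge (n₁ + n₂) 2 with hsmall | hbig
  · have hB2 : mu Bm 2 = 0 := by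
      unfold mu; apply List.getD_eq_default; simp [eigs_card]; omega
    have hM2 : mu Mm 2 = 0 := by
      unfold mu; apply List.getD_eq_default; simp [eigs_card]; omega
    rw [hB2, hM2]; linarith
  by_contra hcon
  push_neg at hcon
  set t := mu Mm 2 + c₁ + c₂ with htdef
  -- two eigenvalues of B exceed t
  have hmuB : mu Bm 2 = ((eigs Bm).sort (· ≤ ·)).reverse.getD 1 0 := by
    unfold mu
    norm_num
  have hfB : 2 ≤ Multiset.card ((eigs Bm).filter (t < ·)) :=
    aux1 _ (by rw [eigs_card, hcard]; exact hbig) (by rw [← hmuB]; exact hcon)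
  have hconv : ∀ (C : Matrix (Fin n₁ ⊕ Fin n₂) (Fin n₁ ⊕ Fin n₂) ℝ) (hC : C.IsHermitian) (s : ℝ),
      Multiset.card ((eigs C).filter (s < ·)) =
        (Finset.univ.filter (fun k => s < hC.eigenvalues k)).card := by
    intro C hC s
    rw [eigs_eq hC, Multiset.filter_map, Multiset.card_map, Finset.card, Finset.filter_val]
    refine congrArg Multiset.card (Multiset.filter_congr ?_)
    intro a _
    exact Iff.rfl
  rw [hconv Bm hB t] at hfB
  obtain ⟨i, hi, j, hj, hij⟩ := Finset.one_lt_card.1 (lt_of_lt_of_le Nat.one_lt_two hfB)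
  have hti : t < hB.eigenvalues i := (Finset.mem_filter.1 hi).2
  have htj : t < hB.eigenvalues j := (Finset.mem_filter.1 hj).2
  -- at most one eigenvalue of M exceeds mu Mm 2
  have hmuM : mu Mm 2 = ((eigs Mm).sort (· ≤ ·)).reverse.getD 1 0 := by
    unfold mu
    norm_num
  have hfM : (Finset.univ.filter (fun k => mu Mm 2 < hM.eigenvalues k)).card ≤ 1 := by
    rw [← hconv Mm hM]
    rw [hmuM]
    exact aux2 _ (by rw [eigs_card, hcard]; exact hbig)
  -- subspaces
  set P : (Fin n₁ ⊕ Fin n₂) → Prop := fun k => k = i ∨ k = j with hPdef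
  set S : (Fin n₁ ⊕ Fin n₂) → Prop := fun k => hM.eigenvalues k ≤ mu Mm 2 with hSdef
  set W := Submodule.span ℝ (Set.range (fun k : {k // P k} => hB.eigenvectorBasis (k : _)))
    with hWdef
  set U := Submodule.span ℝ (Set.range (fun k : {k // S k} => hM.eigenvectorBasis (k : _)))
    with hUdef
  have hWrank : Module.finrank ℝ W = 2 := by
    rw [hWdef, finrank_span_orthonormal, Fintype.card_subtype]
    rw [show Finset.univ.filter P = {i, j} by ext k; simp [hPdef]]
    rw [Finset.card_insert_of_notMem (by simp [hij]), Finset.card_singleton]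
  have hUrank : Module.finrank ℝ U = (Finset.univ.filter S).card := by
    rw [hUdef, finrank_span_orthonormal, Fintype.card_subtype]
  have hScard : Fintype.card (Fin n₁ ⊕ Fin n₂) - 1 ≤ (Finset.univ.filter S).card := by
    have hsplit := Finset.card_filter_add_card_filter_not
      (s := (Finset.univ : Finset (Fin n₁ ⊕ Fin n₂)))
      (p := fun k => mu Mm 2 < hM.eigenvalues k)
    have hneg : Finset.univ.filter (fun k => ¬ (mu Mm 2 < hM.eigenvalues k)) =
        Finset.univ.filter S := by
      apply Finset.filter_congr
      intro k _
      simp [hSdef, not_lt]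
    rw [hneg, Finset.card_univ] at hsplit
    omega
  have hdim := Submodule.finrank_sup_add_finrank_inf_eq W U
  have hsup : Module.finrank ℝ ↥(W ⊔ U) ≤ Fintype.card (Fin n₁ ⊕ Fin n₂) := by
    have := Submodule.finrank_le (W ⊔ U)
    rwa [finrank_euclideanSpace] at this
  have hinf : 1 ≤ Module.finrank ℝ ↥(W ⊓ U) := by omega
  have hne : W ⊓ U ≠ ⊥ := by
    intro h
    rw [h, finrank_bot] at hinf
    omega
  obtain ⟨x, hxmem, hx0⟩ := Submodule.exists_mem_ne_zero_of_ne_bot hne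
  have hxW : x ∈ W := (Submodule.mem_inf.1 hxmem).1
  have hxU : x ∈ U := (Submodule.mem_inf.1 hxmem).2
  -- quadratic form bounds
  have hq1 : t * ⟪x, x⟫ < ⟪x, Matrix.toEuclideanLin Bm x⟫ := by
    refine quad_lower_strict hB (fun k => ?_) hx0
    by_cases hk : P k
    · rcases hk with rfl | rfl
      · exact Or.inl hti
      · exact Or.inl htj
    · exact Or.inr (repr_eq_zero_of_mem_span hB.eigenvectorBasis hxW hk)
  have hq2 : ⟪x, Matrix.toEuclideanLin Mm x⟫ ≤ mu Mm 2 * ⟪x, x⟫ := by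
    refine quad_upper hM (fun k => ?_)
    by_cases hk : S k
    · exact Or.inl hk
    · exact Or.inr (repr_eq_zero_of_mem_span hM.eigenvectorBasis hxU hk)
  have hsum : Mm = Bm + Matrix.fromBlocks A₁ 0 0 A₃ := by
    rw [hMdef, hBdef, Matrix.fromBlocks_add]
    simp
  have hq3 : ⟪x, Matrix.toEuclideanLin Mm x⟫ = ⟪x, Matrix.toEuclideanLin Bm x⟫ +
      ⟪x, Matrix.toEuclideanLin (Matrix.fromBlocks A₁ 0 0 A₃) x⟫ := by
    rw [hsum, map_add, LinearMap.add_apply, inner_add_right]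
  -- lower bound for the diagonal part
  have hmin1 : ∀ k : Fin n₁, -c₁ ≤ h₁.eigenvalues k := by
    intro k
    have hmem : h₁.eigenvalues k ∈ eigs A₁ := by
      rw [eigs_eq h₁]; exact Multiset.mem_map.2 ⟨k, by simp, rfl⟩
    have h3 := aux3 (eigs A₁) hmem
    rw [eigs_card, Fintype.card_fin] at h3
    have hmu : mu A₁ n₁ = ((eigs A₁).sort (· ≤ ·)).reverse.getD (n₁ - 1) 0 := rfl
    have hc : -(mu A₁ n₁) ≤ c₁ := le_max_right _ _
    rw [hmu] at hc
    linarith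
  have hmin3 : ∀ k : Fin n₂, -c₂ ≤ h₃.eigenvalues k := by
    intro k
    have hmem : h₃.eigenvalues k ∈ eigs A₃ := by
      rw [eigs_eq h₃]; exact Multiset.mem_map.2 ⟨k, by simp, rfl⟩
    have h3 := aux3 (eigs A₃) hmem
    rw [eigs_card, Fintype.card_fin] at h3
    have hmu : mu A₃ n₂ = ((eigs A₃).sort (· ≤ ·)).reverse.getD (n₂ - 1) 0 := rfl
    have hc : -(mu A₃ n₂) ≤ c₂ := le_max_right _ _
    rw [hmu] at hc
    linarith
  have hq4 : -(c₁ + c₂) * ⟪x, x⟫ ≤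
      ⟪x, Matrix.toEuclideanLin (Matrix.fromBlocks A₁ 0 0 A₃) x⟫ := by
    rw [quadD_split A₁ A₃ x, innersq_split x]
    set y₁ := (WithLp.equiv 2 (Fin n₁ → ℝ)).symm (fun i => x (Sum.inl i))
    set y₂ := (WithLp.equiv 2 (Fin n₂ → ℝ)).symm (fun i => x (Sum.inr i))
    have hb1 : (-c₁) * ⟪y₁, y₁⟫ ≤ ⟪y₁, Matrix.toEuclideanLin A₁ y₁⟫ := quad_lower h₁ hmin1
    have hb3 : (-c₂) * ⟪y₂, y₂⟫ ≤ ⟪y₂, Matrix.toEuclideanLin A₃ y₂⟫ := quad_lower h₃ hmin3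
    have hy1 : (0:ℝ) ≤ ⟪y₁, y₁⟫ := real_inner_self_nonneg
    have hy2 : (0:ℝ) ≤ ⟪y₂, y₂⟫ := real_inner_self_nonneg
    nlinarith [mul_nonneg hc₁0 hy2, mul_nonneg hc₂0 hy1]
  have hexp : t * ⟪x, x⟫ = mu Mm 2 * ⟪x, x⟫ + (c₁ + c₂) * ⟪x, x⟫ := by
    rw [htdef]; ring
  linarith
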